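/- For all integers n ≥ 1 and k ≥ 0, C_{n+1}([k]_q | q) = q^k · C_n([k+1]_q | q) + C_{n+1}([k-1]_q | q), where [−1]_q = −q^{-1}. -/

import Mathlib

open Polynomial Finset

noncomputable def qq : RatFunc ℚ := RatFunc.X

noncomputable def qzint (k : ℤ) : RatFunc ℚ := (qq ^ k - 1) / (qq - 1)

lemma hq0 : qq ≠ 0 := RatFunc.X_ne_zero

lemma hq1 : qq - 1 ≠ 0 := by
  have : qq - 1 = algebraMap (Polynomial ℚ) (RatFunc ℚ) (Polynomial.X - 1) := by
    simp [qq, RatFunc.algebraMap_X]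
  rw [this]
  exact RatFunc.algebraMap_ne_zero (Polynomial.X_sub_C_ne_zero 1)

theorem statement2 (Cs : ℕ → Polynomial (RatFunc ℚ))
    (h1 : Cs 1 = 1)
    (h2 : ∀ n, 2 ≤ n → (Cs n).eval (-qq⁻¹) = 0)
    (h3 : ∀ n, 1 ≤ n →
      Cs (n + 1) -
          (Cs (n + 1)).comp (Polynomial.C qq⁻¹ * Polynomial.X - Polynomial.C qq⁻¹) =
        (1 + Polynomial.C (qq - 1) * Polynomial.X) *
          (Cs n).comp (Polynomial.C qq * Polynomial.X + 1))
    (n : ℕ) (hn : 1 ≤ n) (k : ℕ) :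
    (Cs (n + 1)).eval (qzint (k : ℤ)) =
      qq ^ k * (Cs n).eval (qzint ((k : ℤ) + 1)) +
        (Cs (n + 1)).eval (qzint ((k : ℤ) - 1)) := by
  have e1 : qq⁻¹ * qzint (k : ℤ) - qq⁻¹ = qzint ((k : ℤ) - 1) := by
    unfold qzint
    rw [zpow_sub₀ hq0, zpow_one]
    field_simp [hq0, hq1]
    ring
  have e2 : qq * qzint (k : ℤ) + 1 = qzint ((k : ℤ) + 1) := by
    unfold qzint
    rw [zpow_add₀ hq0, zpow_one]
    field_simp [hq1]
    ring
  have e3 : 1 + (qq - 1) * qzint (k : ℤ) = qq ^ k := by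
    unfold qzint
    rw [zpow_natCast]
    field_simp [hq1]
    ring
  have h := congrArg (Polynomial.eval (qzint (k : ℤ))) (h3 n hn)
  simp only [eval_sub, eval_mul, eval_add, eval_one, eval_comp, eval_C, eval_X] at h
  rw [e1, e2, e3] at h
  linear_combination h
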